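/- For 0 ≤ k ≤ 2n, the number of k-dimensional totally isotropic subspaces of F_q^{2n} (with respect to a nondegenerate alternating bilinear form) is [n choose k]_q · Π_{i=n−k+1}^{n} (q^i + 1); in particular every maximal totally isotropic subspace has dimension n. -/

import Mathlib

/-- Gaussian (q-)binomial coefficient, via the q-Pascal recurrence. -/
def qbinom {R : Type*} [CommSemiring R] (q : R) : ℕ → ℕ → R
  | _, 0 => 1
  | 0, _ + 1 => 0
  | n + 1, k + 1 => qbinom q n k + q ^ (k + 1) * qbinom q n (k + 1)

lemma qbinom_zero {R : Type*} [CommSemiring R] (q : R) : ∀ {n k : ℕ}, n < k → qbinom q n k = 0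
  | 0, _ + 1, _ => rfl
  | n + 1, k + 1, h => by
    rw [qbinom, qbinom_zero q (show n < k by omega), qbinom_zero q (show n < k + 1 by omega),
      mul_zero, add_zero]

lemma prod_Icc_eq_insert {a b : ℕ} (h : a ≤ b) (f : ℕ → ℕ) :
    ∏ j ∈ Finset.Icc a b, f j = f a * ∏ j ∈ Finset.Icc (a + 1) b, f j := by
  have : Finset.Icc a b = insert a (Finset.Icc (a + 1) b) := by
    ext x; simp; omega
  rw [this, Finset.prod_insert (by simp)]

lemma gauss_identity (q : ℕ) (hq : 1 ≤ q) :
    ∀ n k : ℕ, k ≤ n →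
      qbinom q n k * ∏ j ∈ Finset.Icc 1 k, (q ^ j - 1) =
        ∏ j ∈ Finset.Icc (n - k + 1) n, (q ^ j - 1) := by
  intro n
  induction n with
  | zero => intro k hk; interval_cases k; simp [qbinom]
  | succ n ih =>
    intro k hk
    match k with
    | 0 => simp [qbinom]
    | k + 1 =>
      rw [qbinom]
      by_cases hkn : k + 1 ≤ n
      · have h1 := ih k (by omega)
        have h2 := ih (k + 1) hkn
        have e1 : n - (k + 1) + 1 = n - k := by omega
        rw [e1] at h2
        have h2' : qbinom q n (k + 1) * ∏ j ∈ Finset.Icc 1 (k + 1), (q ^ j - 1) =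
            (q ^ (n - k) - 1) * ∏ j ∈ Finset.Icc (n - k + 1) n, (q ^ j - 1) := by
          rw [h2, prod_Icc_eq_insert (by omega)]
        have hsplit : ∏ j ∈ Finset.Icc 1 (k + 1), (q ^ j - 1) =
            (∏ j ∈ Finset.Icc 1 k, (q ^ j - 1)) * (q ^ (k + 1) - 1) :=
          Finset.prod_Icc_succ_top (by omega) _
        have e2 : n + 1 - (k + 1) + 1 = n - k + 1 := by omega
        rw [e2, Finset.prod_Icc_succ_top (show n - k + 1 ≤ n + 1 by omega)]
        have hscal : (q ^ (k + 1) - 1) + q ^ (k + 1) * (q ^ (n - k) - 1) = q ^ (n + 1) - 1 := by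
          have h3 : q ^ (k + 1) * q ^ (n - k) = q ^ (n + 1) := by
            rw [← pow_add]; congr 1; omega
          have h4 : 1 ≤ q ^ (n - k) := Nat.one_le_pow _ _ hq
          have h5 : 1 ≤ q ^ (k + 1) := Nat.one_le_pow _ _ hq
          have h7 : 1 ≤ q ^ (k + 1) * q ^ (n - k) := Nat.one_le_of_lt (by positivity) |>.trans (le_refl _) |>.trans (le_refl _)
          rw [← h3]
          zify [h4, h5, h7]
          ring
        calc (qbinom q n k + q ^ (k + 1) * qbinom q n (k + 1)) *
              ∏ j ∈ Finset.Icc 1 (k + 1), (q ^ j - 1)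
            = (qbinom q n k * ∏ j ∈ Finset.Icc 1 k, (q ^ j - 1)) * (q ^ (k + 1) - 1) +
              q ^ (k + 1) * (qbinom q n (k + 1) * ∏ j ∈ Finset.Icc 1 (k + 1), (q ^ j - 1)) := by
              rw [hsplit]; ring
          _ = ((q ^ (k + 1) - 1) + q ^ (k + 1) * (q ^ (n - k) - 1)) *
              ∏ j ∈ Finset.Icc (n - k + 1) n, (q ^ j - 1) := by rw [h1, h2']; ring
          _ = (∏ j ∈ Finset.Icc (n - k + 1) n, (q ^ j - 1)) * (q ^ (n + 1) - 1) := by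
              rw [hscal]; ring
      · obtain rfl : n = k := by omega
        rw [qbinom_zero (n := n) (k := n + 1) q (by omega), mul_zero, add_zero]
        have e : n + 1 - (n + 1) + 1 = 1 := by omega
        rw [e, Finset.prod_Icc_succ_top (show 1 ≤ n + 1 by omega)]
        have h := ih n le_rfl
        rw [show n - n + 1 = 1 by omega] at h
        rw [← mul_assoc, h]

lemma prod_range_sub_eq_Icc (f : ℕ → ℕ) (m k : ℕ) (h : k ≤ m) :
    ∏ i ∈ Finset.range k, f (m - i) = ∏ j ∈ Finset.Icc (m - k + 1) m, f j := by
  refine Finset.prod_nbij' (fun i => m - i) (fun j => m - j) ?_ ?_ ?_ ?_ ?_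
  · intro a ha; simp at ha ⊢; omega
  · intro a ha; simp at ha ⊢; omega
  · intro a ha; simp at ha ⊢; omega
  · intro a ha; simp at ha ⊢; omega
  · intro a ha; rfl

lemma key_identity (q n k : ℕ) (hq : 1 ≤ q) (hk : k ≤ n) :
    (qbinom q n k * ∏ i ∈ Finset.Icc (n - k + 1) n, (q ^ i + 1)) *
      ∏ i ∈ Finset.range k, (q ^ k - q ^ i) =
    ∏ i ∈ Finset.range k, (q ^ (2 * n - i) - q ^ i) := by
  have e1 : ∏ i ∈ Finset.range k, (q ^ k - q ^ i) =
      (∏ i ∈ Finset.range k, q ^ i) * ∏ i ∈ Finset.range k, (q ^ (k - i) - 1) := by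
    rw [← Finset.prod_mul_distrib]
    refine Finset.prod_congr rfl fun i hi => ?_
    simp only [Finset.mem_range] at hi
    have hp : q ^ i * q ^ (k - i) = q ^ k := by rw [← pow_add]; congr 1; omega
    have h1 : 1 ≤ q ^ (k - i) := Nat.one_le_pow _ _ hq
    have hp' : (q:ℤ) ^ i * (q:ℤ) ^ (k - i) = (q:ℤ) ^ k := by exact_mod_cast hp
    zify [h1, Nat.pow_le_pow_right hq (le_of_lt hi)]
    rw [← hp']; ring
  have e2 : ∏ i ∈ Finset.range k, (q ^ (2 * n - i) - q ^ i) =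
      (∏ i ∈ Finset.range k, q ^ i) *
        ((∏ i ∈ Finset.range k, (q ^ (n - i) - 1)) * ∏ i ∈ Finset.range k, (q ^ (n - i) + 1)) := by
    rw [← Finset.prod_mul_distrib, ← Finset.prod_mul_distrib]
    refine Finset.prod_congr rfl fun i hi => ?_
    simp only [Finset.mem_range] at hi
    have hik : i < n := lt_of_lt_of_le hi hk
    have hp : q ^ i * (q ^ (n - i) * q ^ (n - i)) = q ^ (2 * n - i) := by
      rw [← pow_add, ← pow_add]; congr 1; omega
    have h1 : 1 ≤ q ^ (n - i) := Nat.one_le_pow _ _ hq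
    have h2 : q ^ i ≤ q ^ (2 * n - i) := Nat.pow_le_pow_right hq (by omega)
    have hp' : (q:ℤ) ^ i * ((q:ℤ) ^ (n - i) * (q:ℤ) ^ (n - i)) = (q:ℤ) ^ (2 * n - i) := by
      exact_mod_cast hp
    zify [h1, h2]
    rw [← hp']; ring
  have r1 : ∏ i ∈ Finset.range k, (q ^ (k - i) - 1) =
      ∏ j ∈ Finset.Icc 1 k, (q ^ j - 1) := by
    rw [prod_range_sub_eq_Icc (fun j => q ^ j - 1) k k le_rfl, show k - k + 1 = 1 by omega]
  have r2 : ∏ i ∈ Finset.range k, (q ^ (n - i) - 1) =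
      ∏ j ∈ Finset.Icc (n - k + 1) n, (q ^ j - 1) :=
    prod_range_sub_eq_Icc (fun j => q ^ j - 1) n k hk
  have r3 : ∏ i ∈ Finset.range k, (q ^ (n - i) + 1) =
      ∏ j ∈ Finset.Icc (n - k + 1) n, (q ^ j + 1) :=
    prod_range_sub_eq_Icc (fun j => q ^ j + 1) n k hk
  rw [e1, e2, r1, r2, r3]
  calc (qbinom q n k * ∏ i ∈ Finset.Icc (n - k + 1) n, (q ^ i + 1)) *
        ((∏ i ∈ Finset.range k, q ^ i) * ∏ j ∈ Finset.Icc 1 k, (q ^ j - 1))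
      = (qbinom q n k * ∏ j ∈ Finset.Icc 1 k, (q ^ j - 1)) *
        ((∏ i ∈ Finset.range k, q ^ i) * ∏ i ∈ Finset.Icc (n - k + 1) n, (q ^ i + 1)) := by ring
    _ = (∏ j ∈ Finset.Icc (n - k + 1) n, (q ^ j - 1)) *
        ((∏ i ∈ Finset.range k, q ^ i) * ∏ i ∈ Finset.Icc (n - k + 1) n, (q ^ i + 1)) := by
        rw [gauss_identity q hq n k hk]
    _ = _ := by ring

open LinearMap Module Finset

set_option linter.unusedSectionVars false

section Geometry

variable {F V : Type*} [Field F] [Fintype F] [AddCommGroup V] [Module F V] [Finite V]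
variable {B : V →ₗ[F] V →ₗ[F] F}

attribute [local instance] Fintype.ofFinite


lemma ortho_of_mem_span {k : ℕ} {t : Fin k → V} {w : V} (hw : ∀ i, B (t i) w = 0) :
    ∀ u ∈ Submodule.span F (Set.range t), B u w = 0 := by
  intro u hu
  have hle : Submodule.span F (Set.range t) ≤ LinearMap.ker (B.flip w) :=
    Submodule.span_le.mpr (by rintro x ⟨i, rfl⟩; simpa [LinearMap.mem_ker] using hw i)
  simpa [LinearMap.mem_ker] using hle hu

lemma span_isotropic {k : ℕ} {t : Fin k → V} (h : ∀ i j, B (t i) (t j) = 0) :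
    ∀ u ∈ Submodule.span F (Set.range t), ∀ v ∈ Submodule.span F (Set.range t), B u v = 0 := by
  intro u hu v hv
  have hv' : ∀ i, B (t i) v = 0 := by
    intro i
    have hle : Submodule.span F (Set.range t) ≤ LinearMap.ker (B (t i)) :=
      Submodule.span_le.mpr (by rintro x ⟨j, rfl⟩; simpa [LinearMap.mem_ker] using h i j)
    simpa [LinearMap.mem_ker] using hle hv
  exact ortho_of_mem_span hv' u hu

lemma span_le_orthogonal {k : ℕ} {t : Fin k → V} (h : ∀ i j, B (t i) (t j) = 0) :
    Submodule.span F (Set.range t) ≤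
      LinearMap.BilinForm.orthogonal B (Submodule.span F (Set.range t)) := by
  intro x hx
  rw [LinearMap.BilinForm.mem_orthogonal_iff]
  intro n hn
  exact span_isotropic h n hn x hx

lemma card_submodule (U : Submodule F V) :
    Nat.card U = Fintype.card F ^ finrank F U := by
  rw [Nat.card_eq_fintype_card, card_eq_pow_finrank (K := F)]

lemma card_mem_diff {O U : Submodule F V} (h : U ≤ O) :
    Nat.card {v : V // v ∈ O ∧ v ∉ U} =
      Fintype.card F ^ finrank F O - Fintype.card F ^ finrank F U := by
  have e : {v : V // v ∈ O ∧ v ∉ U} ≃ ((O : Set V) \ (U : Set V) : Set V) :=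
    Equiv.subtypeEquivRight (fun x => by simp [Set.mem_diff])
  rw [Nat.card_congr e, Nat.card_coe_set_eq,
    Set.ncard_diff (by exact_mod_cast h) (Set.toFinite _)]
  rw [← Nat.card_coe_set_eq, ← Nat.card_coe_set_eq]
  show Nat.card O - Nat.card U = _
  rw [card_submodule, card_submodule]

lemma card_eq_of_fiber_const {A S : Type*} [Finite A] [Finite S] (f : A → S) (c : ℕ)
    (h : ∀ s, Nat.card {a // f a = s} = c) : Nat.card A = Nat.card S * c := by
  classical
  rw [Nat.card_eq_fintype_card, Nat.card_eq_fintype_card,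
    ← Fintype.card_congr (Equiv.sigmaFiberEquiv f), Fintype.card_sigma]
  have : ∀ s : S, Fintype.card {a // f a = s} = c := fun s => by
    rw [← Nat.card_eq_fintype_card]; exact h s
  simp [this, Finset.sum_const, Finset.card_univ, mul_comm]

variable (B) in
/-- Linearly independent pairwise-orthogonal tuples. -/
def IsoTuple (k : ℕ) : Type _ :=
  { t : Fin k → V // LinearIndependent F t ∧ ∀ i j, B (t i) (t j) = 0 }

instance (k : ℕ) : Finite (IsoTuple B k) := by unfold IsoTuple; infer_instance

lemma card_fiber_ext (halt : ∀ v : V, B v v = 0) (k : ℕ)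
    (t : Fin k → V) (hind : LinearIndependent F t) (hort : ∀ i j, B (t i) (t j) = 0) :
    Nat.card {s : IsoTuple B (k+1) // Fin.init s.1 = t} =
      Nat.card {v : V //
        v ∈ LinearMap.BilinForm.orthogonal B (Submodule.span F (Set.range t)) ∧
        v ∉ Submodule.span F (Set.range t)} := by
  have hrefl : B.IsRefl := LinearMap.IsAlt.isRefl halt
  apply Nat.card_congr
  refine
    { toFun := fun s => ⟨s.1.1 (Fin.last k), ?_, ?_⟩
      invFun := fun v => ⟨⟨Fin.snoc t v.1, ?_, ?_⟩, Fin.init_snoc _ _⟩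
      left_inv := ?_
      right_inv := ?_ }
  · obtain ⟨⟨sf, hsind, hsort⟩, hst⟩ := s
    subst hst
    rw [LinearMap.BilinForm.mem_orthogonal_iff]
    intro n hn
    have hw : ∀ i, B (Fin.init sf i) (sf (Fin.last k)) = 0 := fun i =>
      hsort i.castSucc (Fin.last k)
    exact ortho_of_mem_span hw n hn
  · obtain ⟨⟨sf, hsind, hsort⟩, hst⟩ := s
    subst hst
    have h1 := hsind
    rw [← Fin.snoc_init_self sf, linearIndependent_fin_snoc] at h1
    exact h1.2
  · exact linearIndependent_fin_snoc.mpr ⟨hind, v.2.2⟩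
  · have hvU : ∀ n ∈ Submodule.span F (Set.range t), B n v.1 = 0 := by
      have h2 := v.2.1; rw [LinearMap.BilinForm.mem_orthogonal_iff] at h2; exact h2
    intro i j
    refine Fin.lastCases ?_ ?_ i
    · refine Fin.lastCases ?_ ?_ j
      · rw [Fin.snoc_last]; exact halt _
      · intro j'
        rw [Fin.snoc_last, Fin.snoc_castSucc]
        exact hrefl _ _ (hvU (t j') (Submodule.subset_span ⟨j', rfl⟩))
    · intro i'
      refine Fin.lastCases ?_ ?_ j
      · rw [Fin.snoc_castSucc, Fin.snoc_last]
        exact hvU (t i') (Submodule.subset_span ⟨i', rfl⟩)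
      · intro j'
        rw [Fin.snoc_castSucc, Fin.snoc_castSucc]
        exact hort i' j'
  · rintro ⟨⟨sf, hsind, hsort⟩, hst⟩
    subst hst
    refine Subtype.ext (Subtype.ext ?_)
    show Fin.snoc (Fin.init sf) (sf (Fin.last k)) = sf
    exact Fin.snoc_init_self _
  · intro v
    exact Subtype.ext (by simp)

lemma card_isoTuple_succ (halt : ∀ v : V, B v v = 0)
    (hnondeg : ∀ v : V, (∀ w, B v w = 0) → v = 0) (k : ℕ) :
    Nat.card (IsoTuple B (k + 1)) = Nat.card (IsoTuple B k) *
      (Fintype.card F ^ (finrank F V - k) - Fintype.card F ^ k) := by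
  have hrefl : B.IsRefl := LinearMap.IsAlt.isRefl halt
  apply card_eq_of_fiber_const (f := fun s : IsoTuple B (k + 1) =>
    (⟨Fin.init s.1, s.2.1.comp Fin.castSucc (Fin.castSucc_injective k),
      fun i j => s.2.2 i.castSucc j.castSucc⟩ : IsoTuple B k))
  intro tt
  have e : {s : IsoTuple B (k + 1) //
      (⟨Fin.init s.1, s.2.1.comp Fin.castSucc (Fin.castSucc_injective k),
        fun i j => s.2.2 i.castSucc j.castSucc⟩ : IsoTuple B k) = tt} ≃
      {s : IsoTuple B (k + 1) // Fin.init s.1 = tt.1} :=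
    Equiv.subtypeEquivRight (fun s =>
      ⟨fun h => congrArg Subtype.val h, fun h => Subtype.ext h⟩)
  rw [Nat.card_congr e, card_fiber_ext halt k tt.1 tt.2.1 tt.2.2]
  have hU : finrank F (Submodule.span F (Set.range tt.1)) = k := by
    rw [finrank_span_eq_card tt.2.1, Fintype.card_fin]
  rw [card_mem_diff (span_le_orthogonal tt.2.2),
    LinearMap.BilinForm.finrank_orthogonal (hrefl.nondegenerate_iff_separatingLeft.mpr hnondeg), hU]

lemma card_isoTuple (halt : ∀ v : V, B v v = 0)
    (hnondeg : ∀ v : V, (∀ w, B v w = 0) → v = 0) : ∀ k : ℕ,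
    Nat.card (IsoTuple B k) =
      ∏ i ∈ Finset.range k, (Fintype.card F ^ (finrank F V - i) - Fintype.card F ^ i)
  | 0 => by
    have : Unique (IsoTuple B 0) :=
      { default := ⟨fun i => i.elim0, linearIndependent_empty_type, fun i j => i.elim0⟩
        uniq := fun a => Subtype.ext (funext fun i => i.elim0) }
    simp [Nat.card_unique]
  | k + 1 => by
    rw [card_isoTuple_succ halt hnondeg k, card_isoTuple halt hnondeg k,
      Finset.prod_range_succ]

variable (B) in
/-- Totally isotropic subspaces of dimension `k`. -/
def IsoSub (k : ℕ) : Type _ :=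
  {U : Submodule F V // (∀ u ∈ U, ∀ v ∈ U, B u v = 0) ∧ finrank F U = k}

instance (k : ℕ) : Finite (IsoSub B k) := by unfold IsoSub; infer_instance

lemma card_isoTuple_eq_isoSub (k : ℕ) :
    Nat.card (IsoTuple B k) = Nat.card (IsoSub B k) *
      ∏ i ∈ Finset.range k, (Fintype.card F ^ k - Fintype.card F ^ i) := by
  apply card_eq_of_fiber_const (f := fun t : IsoTuple B k =>
    (⟨Submodule.span F (Set.range t.1), span_isotropic t.2.2,
      by rw [finrank_span_eq_card t.2.1, Fintype.card_fin]⟩ : IsoSub B k))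
  intro U
  have e : {t : IsoTuple B k //
      (⟨Submodule.span F (Set.range t.1), span_isotropic t.2.2,
        by rw [finrank_span_eq_card t.2.1, Fintype.card_fin]⟩ : IsoSub B k) = U} ≃
      {s : Fin k → U.1 // LinearIndependent F s} :=
    { toFun := fun t => ⟨fun i => ⟨t.1.1 i, by
        rw [← congrArg Subtype.val t.2]; exact Submodule.subset_span ⟨i, rfl⟩⟩,
        LinearIndependent.of_comp U.1.subtype t.1.2.1⟩
      invFun := fun s => by
        have hind : LinearIndependent F (fun i => ((s.1 i : V))) :=
          s.2.map' U.1.subtype (Submodule.ker_subtype _)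
        have hspan : Submodule.span F (Set.range fun i => ((s.1 i : V))) = U.1 := by
          apply Submodule.eq_of_le_of_finrank_eq
          · exact Submodule.span_le.mpr (by rintro x ⟨i, rfl⟩; exact (s.1 i).2)
          · rw [finrank_span_eq_card hind, Fintype.card_fin, U.2.2]
        exact ⟨⟨fun i => (s.1 i : V), hind, fun i j => U.2.1 _ (s.1 i).2 _ (s.1 j).2⟩,
          Subtype.ext hspan⟩
      left_inv := fun t => Subtype.ext (Subtype.ext rfl)
      right_inv := fun s => Subtype.ext (funext fun i => Subtype.ext rfl) }
  rw [Nat.card_congr e]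
  have : Finite U.1 := by infer_instance
  rw [card_linearIndependent (K := F) (V := U.1) (by rw [U.2.2])]
  rw [← Fin.prod_univ_eq_prod_range (fun i => Fintype.card F ^ k - Fintype.card F ^ i) k]
  refine Finset.prod_congr rfl fun i _ => by rw [U.2.2]

lemma finrank_le_half (halt : ∀ v : V, B v v = 0)
    (hnondeg : ∀ v : V, (∀ w, B v w = 0) → v = 0) {U : Submodule F V}
    (hiso : ∀ u ∈ U, ∀ v ∈ U, B u v = 0) :
    finrank F U + finrank F U ≤ finrank F V := by
  have hrefl : B.IsRefl := LinearMap.IsAlt.isRefl halt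
  have hle : U ≤ LinearMap.BilinForm.orthogonal B U := by
    intro x hx
    rw [LinearMap.BilinForm.mem_orthogonal_iff]
    intro n hn
    exact hiso n hn x hx
  have h1 := Submodule.finrank_mono hle
  rw [LinearMap.BilinForm.finrank_orthogonal (hrefl.nondegenerate_iff_separatingLeft.mpr hnondeg)] at h1
  have h2 : finrank F U ≤ finrank F V := U.finrank_le
  omega

lemma max_iso (halt : ∀ v : V, B v v = 0)
    (hnondeg : ∀ v : V, (∀ w, B v w = 0) → v = 0) {U : Submodule F V}
    (hiso : ∀ u ∈ U, ∀ v ∈ U, B u v = 0)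
    (hmax : ∀ W : Submodule F V, (∀ u ∈ W, ∀ v ∈ W, B u v = 0) → U ≤ W → U = W) :
    2 * finrank F U = finrank F V := by
  have hrefl : B.IsRefl := LinearMap.IsAlt.isRefl halt
  have hle : U ≤ LinearMap.BilinForm.orthogonal B U := by
    intro x hx
    rw [LinearMap.BilinForm.mem_orthogonal_iff]
    intro n hn
    exact hiso n hn x hx
  have hhalf := finrank_le_half halt hnondeg hiso
  by_contra hne
  have horth := LinearMap.BilinForm.finrank_orthogonal (hrefl.nondegenerate_iff_separatingLeft.mpr hnondeg) U
  have hneq : U ≠ LinearMap.BilinForm.orthogonal B U := fun h => by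
    rw [← h] at horth; omega
  obtain ⟨v, hvO, hvU⟩ := SetLike.exists_of_lt (lt_of_le_of_ne hle hneq)
  have hBv : ∀ u ∈ U, B u v = 0 := by
    rw [LinearMap.BilinForm.mem_orthogonal_iff] at hvO
    exact hvO
  have hWiso : ∀ x ∈ U ⊔ Submodule.span F {v}, ∀ y ∈ U ⊔ Submodule.span F {v}, B x y = 0 := by
    intro x hx y hy
    rw [Submodule.mem_sup] at hx hy
    obtain ⟨u, hu, z, hz, rfl⟩ := hx
    obtain ⟨w, hw, z', hz', rfl⟩ := hy
    rw [Submodule.mem_span_singleton] at hz hz'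
    obtain ⟨a, rfl⟩ := hz
    obtain ⟨b, rfl⟩ := hz'
    have h1 : B u w = 0 := hiso u hu w hw
    have h2 : B u v = 0 := hBv u hu
    have h3 : B v w = 0 := hrefl w v (hBv w hw)
    have h4 : B v v = 0 := halt v
    simp [map_add, map_smul, h1, h2, h3, h4]
  have heq := hmax _ hWiso le_sup_left
  apply hvU
  rw [heq]
  exact Submodule.mem_sup_right (Submodule.mem_span_singleton_self v)

end Geometry

/-- Over a finite field `F` with `q` elements, given a
nondegenerate alternating bilinear form `B` on `F^{2n}`, the number of
`k`-dimensional totally isotropic subspaces is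
`[n choose k]_q · Π_{i=n−k+1}^n (q^i + 1)`, and every maximal totally
isotropic subspace has dimension `n`. -/
theorem isotropic_subspace_count
    (F : Type*) [Field F] [Fintype F] (n k : ℕ) (hk : k ≤ 2 * n)
    (B : (Fin (2 * n) → F) →ₗ[F] (Fin (2 * n) → F) →ₗ[F] F)
    (halt : ∀ v, B v v = 0)
    (hnondeg : ∀ v, (∀ w, B v w = 0) → v = 0) :
    Nat.card {U : Submodule F (Fin (2 * n) → F) //
        (∀ u ∈ U, ∀ v ∈ U, B u v = 0) ∧ Module.finrank F U = k} =
      qbinom (Fintype.card F) n k *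
        ∏ i ∈ Finset.Icc (n - k + 1) n, ((Fintype.card F) ^ i + 1)
    ∧ ∀ U : Submodule F (Fin (2 * n) → F), (∀ u ∈ U, ∀ v ∈ U, B u v = 0) →
        (∀ W : Submodule F (Fin (2 * n) → F),
          (∀ u ∈ W, ∀ v ∈ W, B u v = 0) → U ≤ W → U = W) →
        Module.finrank F U = n := by
  classical
  have hq : 1 < Fintype.card F := Fintype.one_lt_card
  have hN : Module.finrank F (Fin (2 * n) → F) = 2 * n := Module.finrank_fin_fun F
  constructor
  · show Nat.card (IsoSub B k) = _
    by_cases hkn : k ≤ n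
    · have h1 := card_isoTuple_eq_isoSub (B := B) k
      rw [card_isoTuple halt hnondeg k, hN] at h1
      have h2 := key_identity (Fintype.card F) n k (by omega) hkn
      have hpos : 0 < ∏ i ∈ Finset.range k, (Fintype.card F ^ k - Fintype.card F ^ i) :=
        Finset.prod_pos fun i hi =>
          Nat.sub_pos_of_lt (Nat.pow_lt_pow_right hq (Finset.mem_range.mp hi))
      apply Nat.eq_of_mul_eq_mul_right hpos
      rw [h2, ← h1]
    · have hempty : IsEmpty (IsoSub B k) := ⟨fun U => by
        have h := finrank_le_half halt hnondeg U.2.1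
        rw [U.2.2, hN] at h
        omega⟩
      rw [Nat.card_of_isEmpty, qbinom_zero (Fintype.card F) (by omega : n < k), zero_mul]
  · intro U hiso hmax
    have h := max_iso halt hnondeg hiso hmax
    rw [hN] at h
    omega
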